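/- Let Qₙ be the algebra of 'fractional polynomials' on [0,∞)ⁿ, i.e., finite complex linear combinations of monomials t^α = t₁^{α₁}⋯tₙ^{αₙ} with exponents α ∈ (ℚ₊)ⁿ. Fix real fractional polynomials p₁, …, p_m ∈ Qₙ and set θ(t) = (1 + t₁² + ⋯ + tₙ² + p₁(t)² + ⋯ + p_m(t)²)^{-1}. Let R be the complex algebra of functions on [0,∞)ⁿ generated by Qₙ and θ. Then the homomorphism ρ from the algebra generated by Qₙ and the polynomials in one extra nonnegative real variable s, defined by ρ(p)(t) = p(t, θ(t)), is surjective onto R, and its kernel is the ideal generated by the function σ(t, s) = s·θ(t)^{-1} − 1. -/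

import Mathlib

open MeasureTheory
open scoped ComplexOrder

/-- Points of `[0,∞)ⁿ`. -/
abbrev NNVec (n : ℕ) := {t : Fin n → ℝ // ∀ j, 0 ≤ t j}

/-- The real fractional monomial `t ↦ t^α = t₁^{α₁} ⋯ tₙ^{αₙ}` on `[0,∞)ⁿ`
(real powers; the convention `0^0 = 1` is in force). -/
noncomputable def fracMonoR {n : ℕ} (α : Fin n → ℚ) (t : NNVec n) : ℝ :=
  ∏ j, (t.1 j) ^ ((α j : ℝ))

/-- The fractional monomial `t ↦ t^α`, regarded as a complex-valued function. -/
noncomputable def fracMono {n : ℕ} (α : Fin n → ℚ) (t : NNVec n) : ℂ :=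
  ((fracMonoR α t : ℝ) : ℂ)

/-- The set of fractional monomials with nonnegative rational exponents. -/
def fracMonoSet (n : ℕ) : Set (NNVec n → ℂ) :=
  {f | ∃ α : Fin n → ℚ, (∀ j, 0 ≤ α j) ∧ f = fracMono α}

/-- `Qₙ`: the complex algebra of "fractional polynomials" on `[0,∞)ⁿ`, i.e. the algebra
generated by the fractional monomials `t^α`, `α ∈ (ℚ₊)ⁿ`. -/
noncomputable def QAlg (n : ℕ) : Subalgebra ℂ (NNVec n → ℂ) :=
  Algebra.adjoin ℂ (fracMonoSet n)

/-- A real-valued function on `[0,∞)ⁿ` is a *real fractional polynomial* if, viewed as a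
complex-valued function, it belongs to `Qₙ`. -/
def IsRealFracPoly {n : ℕ} (p : NNVec n → ℝ) : Prop :=
  (fun t => ((p t : ℝ) : ℂ)) ∈ QAlg n

/-- `θ_p(t) = (1 + t₁² + ⋯ + tₙ² + p₁(t)² + ⋯ + p_m(t)²)⁻¹`. -/
noncomputable def thetaFn {n m : ℕ} (p : Fin m → (NNVec n → ℝ)) (t : NNVec n) : ℝ :=
  (1 + ∑ j, (t.1 j) ^ 2 + ∑ k, (p k t) ^ 2)⁻¹

/-- `R`: the complex algebra generated by `Qₙ` together with the function `θ_p`. -/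
noncomputable def RAlg (n m : ℕ) (p : Fin m → (NNVec n → ℝ)) : Subalgebra ℂ (NNVec n → ℂ) :=
  Algebra.adjoin ℂ (fracMonoSet n ∪ {fun t => ((thetaFn p t : ℝ) : ℂ)})

/-- The fractional monomials in the first `n` coordinates, as functions on `[0,∞)^{n+1}`. -/
def fracMonoSetFront (n : ℕ) : Set (NNVec (n + 1) → ℂ) :=
  {f | ∃ α : Fin n → ℚ, (∀ j, 0 ≤ α j) ∧
    f = fun x => ((∏ j, (x.1 j.castSucc) ^ ((α j : ℝ)) : ℝ) : ℂ)}

/-- `Q̃ₙ`: the complex algebra generated by `Qₙ` (in the variables `t₁, …, tₙ`) and the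
polynomials in one extra nonnegative real variable `s` (the last coordinate). -/
noncomputable def QtildeAlg (n : ℕ) : Subalgebra ℂ (NNVec (n + 1) → ℂ) :=
  Algebra.adjoin ℂ
    (fracMonoSetFront n ∪ {fun x => ((x.1 (Fin.last n) : ℝ) : ℂ)})

/-- Restriction of a point of `[0,∞)^{n+1}` to its first `n` coordinates. -/
def NNVec.front {n : ℕ} (x : NNVec (n + 1)) : NNVec n :=
  ⟨fun j => x.1 j.castSucc, fun j => x.2 j.castSucc⟩

/-- The embedding `t ↦ (t, θ_p(t))` of `[0,∞)ⁿ` into `[0,∞)^{n+1}`; precomposition with it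
is the substitution homomorphism `ρ : p(t, s) ↦ p(t, θ_p(t))`. -/
noncomputable def embTheta {n m : ℕ} (p : Fin m → (NNVec n → ℝ)) (t : NNVec n) :
    NNVec (n + 1) :=
  ⟨Fin.snoc t.1 (thetaFn p t), by
    intro j
    induction j using Fin.lastCases with
    | last =>
      rw [Fin.snoc_last]
      exact inv_nonneg.mpr (by positivity)
    | cast i =>
      rw [Fin.snoc_castSucc]
      exact t.2 i⟩

section Aux

variable {n m : ℕ}

lemma embTheta_front (p : Fin m → (NNVec n → ℝ)) (t : NNVec n) :
    (embTheta p t).front = t := by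
  apply Subtype.ext
  funext j
  simp [NNVec.front, embTheta, Fin.snoc_castSucc]

lemma embTheta_last (p : Fin m → (NNVec n → ℝ)) (t : NNVec n) :
    (embTheta p t).1 (Fin.last n) = thetaFn p t := by
  simp [embTheta, Fin.snoc_last]

lemma thetaFn_pos (p : Fin m → (NNVec n → ℝ)) (t : NNVec n) : 0 < thetaFn p t := by
  have h : (0:ℝ) < 1 + ∑ j, (t.1 j) ^ 2 + ∑ k, (p k t) ^ 2 := by positivity
  exact inv_pos.mpr h

/-- Precomposition with `NNVec.front`, as an algebra homomorphism. -/
def frontHom (n : ℕ) : (NNVec n → ℂ) →ₐ[ℂ] (NNVec (n+1) → ℂ) where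
  toFun g := fun x => g x.front
  map_one' := rfl
  map_mul' _ _ := rfl
  map_zero' := rfl
  map_add' _ _ := rfl
  commutes' _ := rfl

/-- The last coordinate, as a complex-valued function. -/
def sFun (n : ℕ) : NNVec (n+1) → ℂ := fun x => ((x.1 (Fin.last n) : ℝ) : ℂ)

lemma sFun_mem : sFun n ∈ QtildeAlg n :=
  Algebra.subset_adjoin (Or.inr rfl)

lemma frontHom_mem {g : NNVec n → ℂ} (hg : g ∈ QAlg n) : frontHom n g ∈ QtildeAlg n := by
  have hle : (QAlg n).map (frontHom n) ≤ QtildeAlg n := by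
    rw [QAlg, AlgHom.map_adjoin]
    apply Algebra.adjoin_le
    rintro _ ⟨f, ⟨α, hα, rfl⟩, rfl⟩
    exact Algebra.subset_adjoin (Or.inl ⟨α, hα, rfl⟩)
  exact hle ⟨g, hg, rfl⟩

/-- Evaluation of polynomials with coefficients in `Qₙ` at the last variable. -/
noncomputable def Phi (n : ℕ) : Polynomial (QAlg n) →ₐ[ℂ] (NNVec (n+1) → ℂ) :=
  Polynomial.eval₂AlgHom ((frontHom n).comp (QAlg n).val) (sFun n)
    (fun _ => Commute.all _ _)

lemma Phi_C (a : QAlg n) : Phi n (Polynomial.C a) = frontHom n a.1 := by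
  simp [Phi]

lemma Phi_X : Phi n (Polynomial.X) = sFun n := by
  simp [Phi]

lemma Qtilde_le_range : QtildeAlg n ≤ (Phi n).range := by
  apply Algebra.adjoin_le
  rintro f (⟨α, hα, rfl⟩ | rfl)
  · exact ⟨Polynomial.C ⟨fracMono α, Algebra.subset_adjoin ⟨α, hα, rfl⟩⟩, Phi_C _⟩
  · exact ⟨Polynomial.X, Phi_X⟩

lemma Phi_mem_Qtilde (P : Polynomial (QAlg n)) : Phi n P ∈ QtildeAlg n := by
  induction P using Polynomial.induction_on' with
  | add p q hp hq => rw [map_add]; exact add_mem hp hq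
  | monomial k a =>
    rw [← Polynomial.C_mul_X_pow_eq_monomial, map_mul, map_pow, Phi_C, Phi_X]
    exact mul_mem (frontHom_mem a.2) (pow_mem sFun_mem k)

lemma Phi_apply (P : Polynomial (QAlg n)) (x : NNVec (n+1)) :
    Phi n P x = ∑ k ∈ Finset.range (P.natDegree + 1),
      (P.coeff k : NNVec n → ℂ) x.front * (sFun n x) ^ k := by
  have h : Phi n P = P.eval₂ (((frontHom n).comp (QAlg n).val) : QAlg n →+* (NNVec (n+1) → ℂ))
      (sFun n) := rfl
  rw [h, Polynomial.eval₂_eq_sum_range]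
  rw [Finset.sum_apply]
  rfl

/-- The reciprocal `w = θ⁻¹` of `θ`, as a complex-valued function of `t`. -/
noncomputable def wFun (p : Fin m → (NNVec n → ℝ)) : NNVec n → ℂ :=
  fun t => (((thetaFn p t)⁻¹ : ℝ) : ℂ)

lemma coord_sq_mem (j : Fin n) :
    (fun t : NNVec n => (((t.1 j) ^ 2 : ℝ) : ℂ)) ∈ QAlg n := by
  have h : (fun t : NNVec n => (((t.1 j) ^ 2 : ℝ) : ℂ))
      = fracMono (fun j' => if j' = j then 2 else 0) := by
    funext t
    simp only [fracMono, fracMonoR]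
    congr 1
    rw [Finset.prod_eq_single j]
    · norm_num
    · intro b _ hb
      simp [hb]
    · simp
  rw [h]
  exact Algebra.subset_adjoin ⟨_, fun j' => by by_cases h : j' = j <;> simp [h], rfl⟩

lemma wFun_mem (p : Fin m → (NNVec n → ℝ)) (hp : ∀ k, IsRealFracPoly (p k)) :
    wFun p ∈ QAlg n := by
  have h : wFun p = (1 : NNVec n → ℂ)
      + ∑ j, (fun t : NNVec n => (((t.1 j) ^ 2 : ℝ) : ℂ))
      + ∑ k, (fun t : NNVec n => ((p k t : ℝ) : ℂ)) ^ 2 := by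
    funext t
    simp only [wFun, thetaFn, inv_inv, Pi.add_apply, Pi.one_apply,
      Finset.sum_apply, Pi.pow_apply]
    push_cast
    ring
  rw [h]
  exact add_mem (add_mem (one_mem _) (sum_mem fun j _ => coord_sq_mem j))
    (sum_mem fun k _ => pow_mem (hp k) 2)

lemma theta_mul_w (p : Fin m → (NNVec n → ℝ)) (t : NNVec n) :
    ((thetaFn p t : ℝ) : ℂ) * wFun p t = 1 := by
  have h : (thetaFn p t : ℝ) ≠ 0 := (thetaFn_pos p t).ne'
  rw [wFun]
  push_cast
  rw [mul_inv_cancel₀ (by exact_mod_cast h)]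

/-- The universal division identity. -/
lemma div_identity (N : ℕ) (a : ℕ → ℂ) (w s : ℂ) :
    ∑ k ∈ Finset.range (N+1), a k * s ^ k
      = (∑ k ∈ Finset.range N,
            (-(∑ j ∈ Finset.range (k+1), a j * w ^ (k-j))) * s ^ k) * (s * w - 1)
        + (∑ j ∈ Finset.range (N+1), a j * w ^ (N-j)) * s ^ N := by
  induction N with
  | zero => simp
  | succ N ih =>
    rw [Finset.sum_range_succ (f := fun k => a k * s ^ k), ih,
      Finset.sum_range_succ
        (f := fun k => (-(∑ j ∈ Finset.range (k+1), a j * w ^ (k-j))) * s ^ k)]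
    have h1 : ∑ j ∈ Finset.range (N+1+1), a j * w ^ (N+1-j)
        = (∑ j ∈ Finset.range (N+1), a j * w ^ (N-j)) * w + a (N+1) := by
      rw [Finset.sum_range_succ, Finset.sum_mul]
      simp only [Nat.sub_self, pow_zero, mul_one]
      congr 1
      refine Finset.sum_congr rfl fun j hj => ?_
      have hle : j ≤ N := Nat.lt_succ_iff.mp (Finset.mem_range.mp hj)
      rw [show N+1-j = (N-j)+1 by omega, pow_succ]
      ring
    rw [h1]
    ring

end Aux

/-- The substitution map `ρ : Q̃ₙ → R`, `ρ(p)(t) = p(t, θ(t))` (an algebra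
homomorphism, being precomposition with `t ↦ (t, θ(t))`), maps `Q̃ₙ` onto the algebra `R`
generated by `Qₙ` and `θ`, and its kernel is the ideal of `Q̃ₙ` generated by the function
`σ(t, s) = s·θ(t)⁻¹ − 1`; i.e. `ρ(f) = 0` iff `f = g·σ` for some `g ∈ Q̃ₙ`. -/
theorem rho_surjective_and_kernel (n m : ℕ)
    (p : Fin m → (NNVec n → ℝ)) (hp : ∀ k, IsRealFracPoly (p k)) :
    (∀ f ∈ QtildeAlg n, (fun t => f (embTheta p t)) ∈ RAlg n m p) ∧
    (∀ r ∈ RAlg n m p, ∃ f ∈ QtildeAlg n, ∀ t, f (embTheta p t) = r t) ∧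
    (∀ f ∈ QtildeAlg n,
      ((∀ t, f (embTheta p t) = 0) ↔
        ∃ g ∈ QtildeAlg n,
          f = g * fun x => (((x.1 (Fin.last n) : ℝ) : ℂ) *
            (((thetaFn p x.front)⁻¹ : ℝ) : ℂ) - 1))) := by
  classical
  set θc : NNVec n → ℂ := fun t => ((thetaFn p t : ℝ) : ℂ) with hθc
  have hθmem : θc ∈ RAlg n m p := Algebra.subset_adjoin (Or.inr rfl)
  have hQle : QAlg n ≤ RAlg n m p := Algebra.adjoin_mono Set.subset_union_left
  have hfront : ∀ t : NNVec n, (embTheta p t).front = t := embTheta_front p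
  have hsemb : ∀ t : NNVec n, sFun n (embTheta p t) = θc t := fun t => by
    show ((((embTheta p t).1 (Fin.last n)) : ℝ) : ℂ) = θc t
    rw [embTheta_last]
  refine ⟨?_, ?_, ?_⟩
  · -- Part 1: ρ maps Q̃ into R
    intro f hf
    obtain ⟨P, hP⟩ := Qtilde_le_range hf
    have hPt : ∀ x, f x = ∑ k ∈ Finset.range (P.natDegree + 1),
        (P.coeff k : NNVec n → ℂ) x.front * (sFun n x) ^ k :=
      fun x => by rw [← hP]; exact Phi_apply P x
    have heq : (fun t => f (embTheta p t))
        = ∑ k ∈ Finset.range (P.natDegree + 1),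
            ((P.coeff k : NNVec n → ℂ)) * θc ^ k := by
      funext t
      rw [Finset.sum_apply, hPt (embTheta p t)]
      refine Finset.sum_congr rfl fun k _ => ?_
      rw [hfront t, hsemb t, Pi.mul_apply, Pi.pow_apply]
    rw [heq]
    exact sum_mem fun k _ => mul_mem (hQle (P.coeff k).2) (pow_mem hθmem k)
  · -- Part 2: surjectivity
    intro r hr
    refine Algebra.adjoin_induction ?_ ?_ ?_ ?_ hr
    · rintro x (⟨α, hα, rfl⟩ | rfl)
      · refine ⟨_, Algebra.subset_adjoin (Or.inl ⟨α, hα, rfl⟩), fun t => ?_⟩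
        show ((∏ j, ((embTheta p t).1 j.castSucc) ^ ((α j : ℝ)) : ℝ) : ℂ) = fracMono α t
        have : ∀ j : Fin n, (embTheta p t).1 j.castSucc = t.1 j := fun j => by
          simp [embTheta, Fin.snoc_castSucc]
        simp only [this]
        rfl
      · exact ⟨sFun n, sFun_mem, fun t => hsemb t⟩
    · intro c
      exact ⟨algebraMap ℂ _ c, algebraMap_mem _ c, fun t => rfl⟩
    · rintro x y _ _ ⟨f, hf, hfe⟩ ⟨g, hg, hge⟩
      exact ⟨f + g, add_mem hf hg, fun t => by
        rw [Pi.add_apply, Pi.add_apply, hfe t, hge t]⟩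
    · rintro x y _ _ ⟨f, hf, hfe⟩ ⟨g, hg, hge⟩
      exact ⟨f * g, mul_mem hf hg, fun t => by
        rw [Pi.mul_apply, Pi.mul_apply, hfe t, hge t]⟩
  · -- Part 3: kernel
    intro f hf
    have hw : wFun p ∈ QAlg n := wFun_mem p hp
    constructor
    · intro hv
      obtain ⟨P, hP⟩ := Qtilde_le_range hf
      set N := P.natDegree with hN
      set a : ℕ → NNVec n → ℂ := fun k => (P.coeff k : NNVec n → ℂ) with ha
      have hPt : ∀ x, f x = ∑ k ∈ Finset.range (N+1), a k x.front * (sFun n x) ^ k :=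
        fun x => by rw [← hP]; exact Phi_apply P x
      have hkey : ∀ t : NNVec n,
          ∑ j ∈ Finset.range (N+1), a j t * (wFun p t) ^ (N-j) = 0 := by
        intro t
        have h0 : ∑ k ∈ Finset.range (N+1), a k t * (θc t) ^ k = 0 := by
          have hv0 := hv t
          rw [hPt (embTheta p t)] at hv0
          rw [← hv0]
          refine Finset.sum_congr rfl fun k _ => ?_
          rw [hfront t, hsemb t]
        calc ∑ j ∈ Finset.range (N+1), a j t * (wFun p t) ^ (N-j)
            = ∑ j ∈ Finset.range (N+1), (a j t * θc t ^ j) * (wFun p t) ^ N := by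
              refine Finset.sum_congr rfl fun j hj => ?_
              have hle : j ≤ N := Nat.lt_succ_iff.mp (Finset.mem_range.mp hj)
              have hsplit : (wFun p t) ^ N = (wFun p t) ^ j * (wFun p t) ^ (N-j) := by
                rw [← pow_add]; congr 1; omega
              have h1 : θc t ^ j * (wFun p t) ^ j = 1 := by
                rw [← mul_pow, theta_mul_w, one_pow]
              rw [hsplit]
              linear_combination (-(a j t * (wFun p t) ^ (N-j))) * h1
          _ = (∑ k ∈ Finset.range (N+1), a k t * (θc t) ^ k) * (wFun p t) ^ N := by
              rw [Finset.sum_mul]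
          _ = 0 := by rw [h0, zero_mul]
      set g : NNVec (n+1) → ℂ :=
        ∑ k ∈ Finset.range N,
          (-(∑ j ∈ Finset.range (k+1), frontHom n (a j * (wFun p) ^ (k-j)))) * (sFun n) ^ k
        with hg
      have hgmem : g ∈ QtildeAlg n :=
        sum_mem fun k _ => mul_mem
          (neg_mem (sum_mem fun j _ =>
            frontHom_mem (mul_mem (P.coeff j).2 (pow_mem hw (k-j)))))
          (pow_mem sFun_mem k)
      refine ⟨g, hgmem, ?_⟩
      funext x
      rw [Pi.mul_apply, hPt x,
        div_identity N (fun k => a k x.front) (wFun p x.front) (sFun n x),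
        hkey x.front, zero_mul, add_zero]
      have hgx : g x = ∑ k ∈ Finset.range N,
          (-(∑ j ∈ Finset.range (k+1), a j x.front * (wFun p x.front) ^ (k-j)))
            * (sFun n x) ^ k := by
        rw [hg, Finset.sum_apply]
        refine Finset.sum_congr rfl fun k _ => ?_
        rw [Pi.mul_apply, Pi.neg_apply, Finset.sum_apply, Pi.pow_apply]
        rfl
      rw [hgx]
      rfl
    · rintro ⟨g, hg, rfl⟩
      intro t
      rw [Pi.mul_apply]
      show g (embTheta p t) *
        ((((embTheta p t).1 (Fin.last n) : ℝ) : ℂ) *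
          (((thetaFn p (embTheta p t).front)⁻¹ : ℝ) : ℂ) - 1) = 0
      rw [embTheta_last, hfront t]
      have h2 : ((thetaFn p t : ℝ) : ℂ) * (((thetaFn p t)⁻¹ : ℝ) : ℂ) = 1 :=
        theta_mul_w p t
      rw [h2, sub_self, mul_zero]
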